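/- Let φ ∈ L²(ℝ), λ > 0, Λ = 2π/λ, with the Riesz condition. Define E_λ(ξ) = (∑_{n≠0} |φ̂(ξ+nΛ)|²) / (∑_{n∈ℤ} |φ̂(ξ+nΛ)|²). Suppose w is positive monotone increasing on (0,∞) with M_w(φ) = ∫ w(|ξ|)|φ̂(ξ)|² dξ < ∞ and w(ξ) ≥ cξ^{1+ε} on [1,∞). Then ∫_ℝ E_λ(ξ)|φ̂(ξ)|² dξ ≤ 2 M_w(φ) ∑_{n=1}^∞ 1/w((2n−1)π/λ), and the series on the right converges. -/

import Mathlib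

open MeasureTheory Complex

noncomputable section

/-- Fourier transform with the convention `f̂(ξ) = (2π)^(-1/2) ∫ e^(-ixξ) f(x) dx`. -/
def FT (f : ℝ → ℂ) (ξ : ℝ) : ℂ :=
  ((Real.sqrt (2 * Real.pi))⁻¹ : ℝ) * ∫ x : ℝ, Complex.exp (-(Complex.I * x * ξ)) * f x

lemma ae_ne_zero' : ∀ᵐ ξ : ℝ ∂volume, ξ ≠ 0 := by
  rw [ae_iff]
  simp only [not_not, Set.setOf_eq_eq_singleton]
  exact measure_singleton 0

/-- The core Chebyshev/periodization estimate. -/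
lemma aux_estimate (h w : ℝ → ℝ) (p A M : ℝ)
    (hp : 0 < p) (hA : 0 < A)
    (hm : Measurable h) (hh0 : ∀ ξ, 0 ≤ h ξ)
    (hriesz : ∀ᵐ ξ : ℝ ∂volume, A ≤ 2 * p * ∑' n : ℤ, h (ξ + n * (2 * p)))
    (hwpos : ∀ x : ℝ, 0 < x → 0 < w x)
    (hwmono : ∀ x y : ℝ, 0 < x → x ≤ y → w x ≤ w y)
    (hMint : Integrable (fun ξ : ℝ => w |ξ| * h ξ))
    (hM : M = ∫ ξ : ℝ, w |ξ| * h ξ) :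
    (∫ ξ : ℝ,
        (((∑' n : ℤ, h (ξ + n * (2 * p))) - h ξ) / (∑' n : ℤ, h (ξ + n * (2 * p)))) * h ξ)
      ≤ 2 * (M / w p) := by
  have hwp : 0 < w p := hwpos p hp
  have h'meas : Measurable fun ξ : ℝ => ENNReal.ofReal (h ξ) :=
    ENNReal.measurable_ofReal.comp hm
  set h' : ℝ → ENNReal := fun ξ => ENNReal.ofReal (h ξ) with hh'def
  have hTmeas : Measurable fun ξ : ℝ => ∑' n : ℤ, h' (ξ + n * (2 * p)) :=
    Measurable.ennreal_tsum fun n => h'meas.comp (measurable_add_const _)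
  -- nonnegativity of the weight function
  have hFnonneg : 0 ≤ᶠ[ae volume] fun ξ : ℝ => w |ξ| * h ξ := by
    filter_upwards [ae_ne_zero'] with ξ hξ
    exact mul_nonneg (hwpos _ (abs_pos.mpr hξ)).le (hh0 ξ)
  have hM0 : 0 ≤ M := hM ▸ integral_nonneg_of_ae hFnonneg
  -- key a.e. facts
  have key : ∀ᵐ ξ : ℝ ∂volume,
      Summable (fun n : ℤ => h (ξ + n * (2 * p))) ∧
      0 < (∑' n : ℤ, h (ξ + n * (2 * p))) ∧
      h ξ ≤ (∑' n : ℤ, h (ξ + n * (2 * p))) ∧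
      ENNReal.ofReal (∑' n : ℤ, h (ξ + n * (2 * p))) = ∑' n : ℤ, h' (ξ + n * (2 * p)) := by
    filter_upwards [hriesz] with ξ hξ
    have hsummable : Summable (fun n : ℤ => h (ξ + n * (2 * p))) := by
      by_contra hns
      rw [tsum_eq_zero_of_not_summable hns, mul_zero] at hξ
      linarith
    refine ⟨hsummable, ?_, ?_, ?_⟩
    · nlinarith [hξ]
    · have := Summable.le_tsum hsummable 0 (fun j _ => hh0 _)
      simpa using this
    · exact ENNReal.ofReal_tsum_of_nonneg (fun n => hh0 _) hsummable
  -- the set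
  set s : Set ℝ := {ξ : ℝ | p ≤ |ξ|} with hsdef
  have hs : MeasurableSet s := measurableSet_le measurable_const measurable_abs
  have hsc : sᶜ = Set.Ioo (-p) p := by
    ext x
    simp [hsdef, not_le, abs_lt, Set.mem_Ioo, and_comm]
  -- the integrand as a function
  set g : ℝ → ℝ := fun ξ =>
    (((∑' n : ℤ, h (ξ + n * (2 * p))) - h ξ) / (∑' n : ℤ, h (ξ + n * (2 * p)))) * h ξ with hgdef
  set G : ℝ → ENNReal := fun ξ => ENNReal.ofReal (g ξ) with hGdef
  -- measurability of g (a.e.)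
  have hg_meas : AEStronglyMeasurable g volume := by
    have hgm : Measurable fun ξ : ℝ =>
        (((∑' n : ℤ, h' (ξ + n * (2 * p))).toReal - h ξ) /
          (∑' n : ℤ, h' (ξ + n * (2 * p))).toReal) * h ξ :=
      ((hTmeas.ennreal_toReal.sub hm).div hTmeas.ennreal_toReal).mul hm
    apply hgm.aestronglyMeasurable.congr
    filter_upwards [key] with ξ ⟨hsumm, hpos, hle, hT⟩
    rw [hgdef]
    simp only
    rw [← hT, ENNReal.toReal_ofReal (tsum_nonneg fun n => hh0 _)]
  have hg_nonneg : 0 ≤ᶠ[ae volume] g := by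
    filter_upwards [key] with ξ ⟨hsumm, hpos, hle, hT⟩
    exact mul_nonneg (div_nonneg (by linarith) hpos.le) (hh0 ξ)
  -- Chebyshev estimate on s
  have hcheb : ∫⁻ ξ in s, h' ξ ≤ ENNReal.ofReal (M / w p) := by
    have hptwise : ∀ᵐ ξ ∂(volume.restrict s),
        h' ξ ≤ ENNReal.ofReal ((w p)⁻¹ * (w |ξ| * h ξ)) := by
      rw [ae_restrict_iff' hs]
      refine ae_of_all _ fun ξ hξ => ?_
      apply ENNReal.ofReal_le_ofReal
      have h1 : w p ≤ w |ξ| := hwmono p |ξ| hp hξ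
      have h2 : w p * h ξ ≤ w |ξ| * h ξ := mul_le_mul_of_nonneg_right h1 (hh0 ξ)
      calc h ξ = (w p)⁻¹ * (w p * h ξ) := by field_simp
        _ ≤ (w p)⁻¹ * (w |ξ| * h ξ) :=
            mul_le_mul_of_nonneg_left h2 (inv_nonneg.mpr hwp.le)
    calc ∫⁻ ξ in s, h' ξ
        ≤ ∫⁻ ξ in s, ENNReal.ofReal ((w p)⁻¹ * (w |ξ| * h ξ)) := lintegral_mono_ae hptwise
      _ ≤ ∫⁻ ξ : ℝ, ENNReal.ofReal ((w p)⁻¹ * (w |ξ| * h ξ)) :=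
            setLIntegral_le_lintegral _ _
      _ = ∫⁻ ξ : ℝ, ENNReal.ofReal ((w p)⁻¹) * ENNReal.ofReal (w |ξ| * h ξ) := by
            apply lintegral_congr fun ξ => ?_
            rw [ENNReal.ofReal_mul (inv_nonneg.mpr hwp.le)]
      _ = ENNReal.ofReal ((w p)⁻¹) * ∫⁻ ξ : ℝ, ENNReal.ofReal (w |ξ| * h ξ) :=
            lintegral_const_mul' _ _ ENNReal.ofReal_ne_top
      _ = ENNReal.ofReal ((w p)⁻¹) * ENNReal.ofReal M := by
            rw [hM, ofReal_integral_eq_lintegral_ofReal hMint hFnonneg]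
      _ = ENNReal.ofReal (M / w p) := by
            rw [← ENNReal.ofReal_mul (inv_nonneg.mpr hwp.le), div_eq_mul_inv, mul_comm]
  -- bound on s : G ≤ h'
  have hGs : ∫⁻ ξ in s, G ξ ≤ ∫⁻ ξ in s, h' ξ := by
    apply lintegral_mono_ae
    filter_upwards [ae_restrict_of_ae key] with ξ ⟨hsumm, hpos, hle, hT⟩
    apply ENNReal.ofReal_le_ofReal
    calc g ξ ≤ 1 * h ξ := by
          apply mul_le_mul_of_nonneg_right _ (hh0 ξ)
          rw [div_le_one hpos]
          linarith [hh0 ξ]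
      _ = h ξ := one_mul _
  -- bound on sᶜ : G ≤ ofReal (S - h)
  have hGsc : ∫⁻ ξ in sᶜ, G ξ ≤
      ∫⁻ ξ in sᶜ, ENNReal.ofReal ((∑' n : ℤ, h (ξ + n * (2 * p))) - h ξ) := by
    apply lintegral_mono_ae
    filter_upwards [ae_restrict_of_ae key] with ξ ⟨hsumm, hpos, hle, hT⟩
    apply ENNReal.ofReal_le_ofReal
    calc g ξ = ((∑' n : ℤ, h (ξ + n * (2 * p))) - h ξ) * (h ξ / (∑' n : ℤ, h (ξ + n * (2 * p)))) := by
          rw [hgdef]; ring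
      _ ≤ ((∑' n : ℤ, h (ξ + n * (2 * p))) - h ξ) * 1 := by
          apply mul_le_mul_of_nonneg_left _ (by linarith)
          rw [div_le_one hpos]
          exact hle
      _ = _ := mul_one _
  -- periodization
  have hperiod : (∫⁻ ξ in sᶜ, ENNReal.ofReal ((∑' n : ℤ, h (ξ + n * (2 * p))) - h ξ))
      ≤ ∫⁻ ξ in s, h' ξ := by
    set J : ℤ → Set ℝ := fun n =>
      if n = 0 then (∅ : Set ℝ) else Set.Ioo (-p + n * (2 * p)) (p + n * (2 * p)) with hJdef
    have hJmeas : ∀ n : ℤ, MeasurableSet (J n) := by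
      intro n
      by_cases hn : n = 0
      · simp [hJdef, hn]
      · simp only [hJdef, if_neg hn]
        exact measurableSet_Ioo
    have hJdisj : Pairwise (Function.onFun Disjoint J) := by
      intro m n hmn
      simp only [Function.onFun, hJdef]
      split_ifs with h1 h2 h2
      · simp
      · simp
      · simp
      · rw [Set.disjoint_left]
        rintro x ⟨hx1, hx2⟩ ⟨hx3, hx4⟩
        rcases lt_or_gt_of_ne hmn with hlt | hlt
        · have hcast : (m : ℝ) + 1 ≤ (n : ℝ) := by exact_mod_cast hlt
          have := mul_le_mul_of_nonneg_right hcast (by linarith : (0:ℝ) ≤ 2 * p)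
          nlinarith
        · have hcast : (n : ℝ) + 1 ≤ (m : ℝ) := by exact_mod_cast hlt
          have := mul_le_mul_of_nonneg_right hcast (by linarith : (0:ℝ) ≤ 2 * p)
          nlinarith
    have hJsub : (⋃ n : ℤ, J n) ⊆ s := by
      rintro x hx
      simp only [Set.mem_iUnion] at hx
      obtain ⟨n, hn⟩ := hx
      by_cases h0 : n = 0
      · rw [hJdef] at hn; simp [h0] at hn
      · rw [hJdef] at hn
        simp only [if_neg h0, Set.mem_Ioo] at hn
        obtain ⟨h1, h2⟩ := hn
        rw [hsdef, Set.mem_setOf_eq]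
        rcases lt_or_gt_of_ne h0 with hneg | hpos
        · have hneg' : n ≤ -1 := by omega
          have hcast : (n : ℝ) ≤ -1 := by exact_mod_cast hneg'
          have := mul_le_mul_of_nonneg_right hcast (by linarith : (0:ℝ) ≤ 2 * p)
          refine le_abs.mpr (Or.inr ?_)
          nlinarith
        · have hcast : (1 : ℝ) ≤ (n : ℝ) := by exact_mod_cast hpos
          have := mul_le_mul_of_nonneg_right hcast (by linarith : (0:ℝ) ≤ 2 * p)
          refine le_abs.mpr (Or.inl ?_)
          nlinarith
    have hterm : ∀ n : ℤ, n ≠ 0 →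
        (∫⁻ ξ in Set.Ioo (-p) p, h' (ξ + n * (2 * p))) = ∫⁻ ξ in J n, h' ξ := by
      intro n hn
      rw [hJdef]
      simp only [if_neg hn]
      rw [← Set.image_add_const_Ioo ((n:ℝ) * (2*p)) (-p) p]
      exact (measurePreserving_add_right volume ((n:ℝ) * (2 * p))).setLIntegral_comp_emb
        (measurableEmbedding_addRight _) h' _
    have hae2 : ∀ᵐ ξ ∂(volume.restrict sᶜ),
        ENNReal.ofReal ((∑' n : ℤ, h (ξ + n * (2 * p))) - h ξ)
          = ∑' n : ℤ, (if n = 0 then 0 else h' (ξ + n * (2 * p))) := by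
      filter_upwards [ae_restrict_of_ae key] with ξ ⟨hsumm, hpos, hle, hT⟩
      rw [ENNReal.ofReal_sub _ (hh0 ξ), hT,
        ENNReal.tsum_eq_add_tsum_ite (f := fun n : ℤ => h' (ξ + n * (2 * p))) 0]
      have h0' : h' (ξ + ((0:ℤ):ℝ) * (2 * p)) = ENNReal.ofReal (h ξ) := by norm_num [hh'def]
      rw [h0', ENNReal.add_sub_cancel_left ENNReal.ofReal_ne_top]
      exact tsum_congr fun n => by by_cases hn : n = 0 <;> simp [hn]
    calc (∫⁻ ξ in sᶜ, ENNReal.ofReal ((∑' n : ℤ, h (ξ + n * (2 * p))) - h ξ))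
        = ∫⁻ ξ in sᶜ, ∑' n : ℤ, (if n = 0 then 0 else h' (ξ + n * (2 * p))) :=
          lintegral_congr_ae hae2
      _ = ∑' n : ℤ, ∫⁻ ξ in sᶜ, (if n = 0 then 0 else h' (ξ + n * (2 * p))) := by
          apply lintegral_tsum
          intro n
          by_cases hn : n = 0
          · simp [hn]
          · simp only [if_neg hn]
            exact (h'meas.comp (measurable_add_const _)).aemeasurable
      _ = ∑' n : ℤ, ∫⁻ ξ in J n, h' ξ := by
          apply tsum_congr fun n => ?_
          by_cases hn : n = 0
          · simp [hn, hJdef]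
          · simp only [if_neg hn]
            rw [hsc]
            exact hterm n hn
      _ = ∫⁻ ξ in ⋃ n : ℤ, J n, h' ξ := (lintegral_iUnion hJmeas hJdisj _).symm
      _ ≤ ∫⁻ ξ in s, h' ξ := lintegral_mono_set hJsub
  -- assemble
  rw [show (∫ ξ : ℝ,
      (((∑' n : ℤ, h (ξ + n * (2 * p))) - h ξ) / (∑' n : ℤ, h (ξ + n * (2 * p)))) * h ξ)
      = ∫ ξ : ℝ, g ξ from rfl,
    integral_eq_lintegral_of_nonneg_ae hg_nonneg hg_meas]
  apply ENNReal.toReal_le_of_le_ofReal (by positivity)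
  calc (∫⁻ ξ : ℝ, ENNReal.ofReal (g ξ))
      = (∫⁻ ξ in s, G ξ) + ∫⁻ ξ in sᶜ, G ξ := (lintegral_add_compl G hs).symm
    _ ≤ ENNReal.ofReal (M / w p) + ENNReal.ofReal (M / w p) :=
        add_le_add (hGs.trans hcheb) ((hGsc.trans hperiod).trans hcheb)
    _ = ENNReal.ofReal (2 * (M / w p)) := by
        rw [← ENNReal.ofReal_add (by positivity) (by positivity)]
        ring_nf

lemma FT_measurable (φ : ℝ → ℂ) (hφ : AEStronglyMeasurable φ volume) :
    Measurable (FT φ) := by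
  have hae : φ =ᵐ[volume] hφ.mk φ := hφ.ae_eq_mk
  have heq : FT φ = FT (hφ.mk φ) := by
    funext ξ
    unfold FT
    congr 1
    exact integral_congr_ae (hae.mono fun x hx => by simp only [hx])
  rw [heq]
  have hk : Measurable fun q : ℝ × ℝ =>
      Complex.exp (-(Complex.I * q.2 * q.1)) * (hφ.mk φ) q.2 := by
    apply Measurable.mul
    · exact Complex.measurable_exp.comp
        (((measurable_const.mul (Complex.measurable_ofReal.comp measurable_snd)).mul
          (Complex.measurable_ofReal.comp measurable_fst)).neg)
    · exact hφ.stronglyMeasurable_mk.measurable.comp measurable_snd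
  have hint : Measurable fun ξ : ℝ =>
      ∫ x : ℝ, Complex.exp (-(Complex.I * x * ξ)) * (hφ.mk φ) x :=
    (hk.stronglyMeasurable.integral_prod_right').measurable
  exact measurable_const.mul hint


/-- The prefilter (crosscorrelation) operator `(P_φ f)(x) = ∫ f(y) conj(φ(y-x)) dy`. -/
def Pfil (φ f : ℝ → ℂ) (x : ℝ) : ℂ :=
  ∫ y : ℝ, f y * (starRingEnd ℂ) (φ (y - x))

/-- The localization space `𝒫_φ`, the range of the prefilter `P_φ` on `L²(ℝ)`. -/
def Pspace (φ : ℝ → ℂ) : Set (ℝ → ℂ) :=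
  {g | ∃ f : ℝ → ℂ, MemLp f 2 volume ∧ g = Pfil φ f}

/-- The norm of the localization space `𝒫_φ`. -/
def Nφ (φ g : ℝ → ℂ) : ℝ :=
  Real.sqrt ((2 * Real.pi)⁻¹ *
    ∫ ξ in {ξ : ℝ | FT φ ξ ≠ 0}, ‖FT g ξ‖ ^ 2 / ‖FT φ ξ‖ ^ 2)

/-- The inner product of the localization space `𝒫_φ`. -/
def innerφ (φ g₁ g₂ : ℝ → ℂ) : ℂ :=
  ((2 * Real.pi)⁻¹ : ℂ) *
    ∫ ξ in {ξ : ℝ | FT φ ξ ≠ 0},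
      FT g₁ ξ * (starRingEnd ℂ) (FT g₂ ξ) * ((‖FT φ ξ‖ ^ 2 : ℝ) : ℂ)⁻¹

/-- Membership in the reconstruction subspace `ℛ_λ(φ)`, the closed span in `𝒫_φ`
(with respect to `‖·‖_φ`) of the shifts `Φ(· − nλ)` of the autocorrelation `Φ = P_φ φ`. -/
def InR (φ : ℝ → ℂ) (lam : ℝ) (g : ℝ → ℂ) : Prop :=
  g ∈ Pspace φ ∧ ∀ ε : ℝ, 0 < ε → ∃ (F : Finset ℤ) (c : ℤ → ℂ),
    Nφ φ (fun x => g x - ∑ n ∈ F, c n * Pfil φ φ (x - n * lam)) < ε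

/-- The key integral estimate in the error analysis:
`∫ E_λ(ξ)|φ̂(ξ)|² dξ ≤ 2 M_w(φ) ∑_{n≥1} 1/w((2n−1)π/λ)`, the series converging. -/
theorem aliasing_integral_estimate
    (φ : ℝ → ℂ) (w : ℝ → ℝ) (c ε : ℝ) (lam Λ A B M : ℝ)
    (hlam : 0 < lam) (hΛ : Λ = 2 * Real.pi / lam) (hA : 0 < A)
    (hφ : MemLp φ 2 volume)
    (hriesz : ∀ᵐ ξ : ℝ ∂volume,
      A ≤ Λ * ∑' n : ℤ, ‖FT φ (ξ + n * Λ)‖ ^ 2 ∧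
      Λ * ∑' n : ℤ, ‖FT φ (ξ + n * Λ)‖ ^ 2 ≤ B)
    (hc : 0 < c) (hε : 0 < ε)
    (hwpos : ∀ x : ℝ, 0 < x → 0 < w x)
    (hwmono : ∀ x y : ℝ, 0 < x → x ≤ y → w x ≤ w y)
    (hgrow : ∀ ξ : ℝ, 1 ≤ ξ → c * ξ ^ (1 + ε) ≤ w ξ)
    (hMint : Integrable (fun ξ : ℝ => w |ξ| * ‖FT φ ξ‖ ^ 2))
    (hM : M = ∫ ξ : ℝ, w |ξ| * ‖FT φ ξ‖ ^ 2) :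
    Summable (fun n : ℕ => 1 / w ((2 * n + 1) * Real.pi / lam)) ∧
    (∫ ξ : ℝ,
        (((∑' n : ℤ, ‖FT φ (ξ + n * Λ)‖ ^ 2) - ‖FT φ ξ‖ ^ 2) /
          (∑' n : ℤ, ‖FT φ (ξ + n * Λ)‖ ^ 2)) * ‖FT φ ξ‖ ^ 2)
      ≤ 2 * M * ∑' n : ℕ, 1 / w ((2 * n + 1) * Real.pi / lam) := by
  subst hΛ
  have hπ := Real.pi_pos
  have hp : 0 < Real.pi / lam := div_pos hπ hlam
  have hterm_pos : ∀ n : ℕ, 0 < w ((2 * n + 1) * Real.pi / lam) := by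
    intro n
    apply hwpos
    apply div_pos _ hlam
    have h1 : (0:ℝ) < 2 * (n:ℝ) + 1 := by positivity
    exact mul_pos h1 hπ
  have hsum : Summable (fun n : ℕ => 1 / w ((2 * n + 1) * Real.pi / lam)) := by
    obtain ⟨N, hN⟩ := exists_nat_ge (lam / Real.pi)
    have hlamN : lam ≤ (N:ℝ) * Real.pi := by
      rw [div_le_iff₀ hπ] at hN
      linarith
    rw [← summable_nat_add_iff N]
    have hb : Summable (fun n : ℕ =>
        (c * (Real.pi / lam) ^ (1 + ε))⁻¹ * (((n:ℝ) + 1) ^ (1 + ε))⁻¹) := by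
      apply Summable.mul_left
      have h1 : Summable (fun n : ℕ => (((n:ℝ)) ^ (1 + ε))⁻¹) :=
        Real.summable_nat_rpow_inv.mpr (by linarith)
      have h2 := (summable_nat_add_iff 1).mpr h1
      exact h2.congr fun n => by rw [Nat.cast_add, Nat.cast_one]
    refine Summable.of_nonneg_of_le (fun n => ?_) (fun n => ?_) hb
    · exact div_nonneg zero_le_one (hterm_pos _).le
    · set x : ℝ := (2 * ((n + N : ℕ):ℝ) + 1) * Real.pi / lam with hxdef
      have hxeq : x = (2 * ((n:ℝ) + (N:ℝ)) + 1) * (Real.pi / lam) := by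
        rw [hxdef]; push_cast; ring
      have hnn : (0:ℝ) ≤ (n:ℝ) := Nat.cast_nonneg n
      have hNn : (0:ℝ) ≤ (N:ℝ) := Nat.cast_nonneg N
      have hx1 : 1 ≤ x := by
        rw [hxeq]
        have h3 : (N:ℝ) * (Real.pi / lam) ≤ (2 * ((n:ℝ) + N) + 1) * (Real.pi / lam) := by
          apply mul_le_mul_of_nonneg_right _ hp.le
          linarith
        have h5 : (N:ℝ) * (Real.pi / lam) = (N * Real.pi) / lam := by ring
        have h4 : 1 ≤ (N:ℝ) * (Real.pi / lam) := by
          rw [h5, le_div_iff₀ hlam]; linarith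
        linarith
      have hxle : ((n:ℝ) + 1) * (Real.pi / lam) ≤ x := by
        rw [hxeq]
        apply mul_le_mul_of_nonneg_right _ hp.le
        linarith
      have hwx : c * (((n:ℝ) + 1) ^ (1 + ε) * (Real.pi / lam) ^ (1 + ε)) ≤ w x := by
        refine le_trans ?_ (hgrow x hx1)
        rw [← Real.mul_rpow (by positivity) hp.le]
        exact mul_le_mul_of_nonneg_left
          (Real.rpow_le_rpow (by positivity) hxle (by linarith)) hc.le
      have hd : (0:ℝ) < c * (((n:ℝ) + 1) ^ (1 + ε) * (Real.pi / lam) ^ (1 + ε)) := by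
        have hr1 : (0:ℝ) < ((n:ℝ) + 1) ^ (1 + ε) := Real.rpow_pos_of_pos (by linarith) _
        have hr2 : (0:ℝ) < (Real.pi / lam) ^ (1 + ε) := Real.rpow_pos_of_pos hp _
        positivity
      calc 1 / w ((2 * ((n + N : ℕ):ℝ) + 1) * Real.pi / lam)
          ≤ 1 / (c * (((n:ℝ) + 1) ^ (1 + ε) * (Real.pi / lam) ^ (1 + ε))) :=
            one_div_le_one_div_of_le hd hwx
        _ = (c * (Real.pi / lam) ^ (1 + ε))⁻¹ * (((n:ℝ) + 1) ^ (1 + ε))⁻¹ := by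
            rw [one_div, mul_inv, mul_inv]; ring
  refine ⟨hsum, ?_⟩
  have h2eq : (2:ℝ) * Real.pi / lam = 2 * (Real.pi / lam) := by ring
  rw [h2eq]
  have hm : Measurable fun ξ : ℝ => ‖FT φ ξ‖ ^ 2 :=
    (FT_measurable φ hφ.aestronglyMeasurable).norm.pow_const 2
  have hriesz' : ∀ᵐ ξ : ℝ ∂volume,
      A ≤ 2 * (Real.pi / lam) * ∑' n : ℤ, ‖FT φ (ξ + n * (2 * (Real.pi / lam)))‖ ^ 2 := by
    rw [← h2eq]
    exact hriesz.mono fun ξ hξ => hξ.1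
  have main := aux_estimate (fun ξ => ‖FT φ ξ‖ ^ 2) w (Real.pi / lam) A M hp hA hm
    (fun ξ => by positivity) hriesz' hwpos hwmono hMint hM
  refine le_trans main ?_
  have hM0 : 0 ≤ M := by
    rw [hM]
    apply integral_nonneg_of_ae
    filter_upwards [ae_ne_zero'] with ξ hξ
    exact mul_nonneg (hwpos _ (abs_pos.mpr hξ)).le (by positivity)
  have hterm0 := Summable.le_tsum hsum 0 (fun j _ => div_nonneg zero_le_one (hterm_pos j).le)
  simp only [Nat.cast_zero, mul_zero, zero_add, one_mul] at hterm0
  calc 2 * (M / w (Real.pi / lam)) = 2 * M * (1 / w (Real.pi / lam)) := by ring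
    _ ≤ 2 * M * ∑' n : ℕ, 1 / w ((2 * n + 1) * Real.pi / lam) :=
        mul_le_mul_of_nonneg_left hterm0 (by linarith)


end
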